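/- There is no Σ₁ formula φ(x, p) in the language of set theory with a fixed set parameter p such that, for all ordinals α, α is a cardinal if and only if φ(α, p) holds in V. (Proof idea: pick α large with p ∈ L_α coded below α, and consider the least β > α with L_β ⊨ 'there is a largest cardinal ν'; by upward absoluteness of Σ₁ statements ν would be a cardinal, but ν is not a cardinal in L_{β+1}.) -/

import Mathlib

/-- A ZF-set is a (von Neumann) ordinal iff it is transitive and all of
its elements are transitive. -/
def IsOrd (x : ZFSet) : Prop := x.IsTransitive ∧ ∀ y ∈ x, ZFSet.IsTransitive y

/-- An ordinal `x` is a cardinal iff no element of `x` surjects onto `x`. -/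
def IsCardZ (x : ZFSet) : Prop :=
  IsOrd x ∧ ¬ ∃ b ∈ x, ∃ f : ZFSet, ZFSet.IsFunc b x f ∧
    ∀ c ∈ x, ∃ a ∈ b, ZFSet.pair a c ∈ f

/-- Δ₀ (bounded) formulas in the language of set theory, with de Bruijn variables. -/
inductive D0 : Type
  | mem : ℕ → ℕ → D0
  | eq : ℕ → ℕ → D0
  | not : D0 → D0
  | and : D0 → D0 → D0
  | or : D0 → D0 → D0
  | ball : ℕ → D0 → D0
  | bex : ℕ → D0 → D0

/-- Prepend a value to a valuation (de Bruijn style). -/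
def consV (x : ZFSet) (v : ℕ → ZFSet) : ℕ → ZFSet
  | 0 => x
  | n + 1 => v n

/-- Satisfaction (in `V`) of Δ₀ formulas; bounded quantifiers bind variable `0`. -/
def SatD0 : D0 → (ℕ → ZFSet) → Prop
  | .mem i j, v => v i ∈ v j
  | .eq i j, v => v i = v j
  | .not φ, v => ¬ SatD0 φ v
  | .and φ ψ, v => SatD0 φ v ∧ SatD0 ψ v
  | .or φ ψ, v => SatD0 φ v ∨ SatD0 ψ v
  | .ball n φ, v => ∀ x ∈ v n, SatD0 φ (consV x v)
  | .bex n φ, v => ∃ x ∈ v n, SatD0 φ (consV x v)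

universe u

namespace NoSig
open Cardinal

/-- Bound on the variables a Δ₀ formula depends on. -/
def maxVar : D0 → ℕ
  | .mem i j => max i j + 1
  | .eq i j => max i j + 1
  | .not φ => maxVar φ
  | .and φ ψ => max (maxVar φ) (maxVar ψ)
  | .or φ ψ => max (maxVar φ) (maxVar ψ)
  | .ball n φ => max (n + 1) (maxVar φ - 1)
  | .bex n φ => max (n + 1) (maxVar φ - 1)

theorem consV_cons_agree {x : ZFSet} {v v' : ℕ → ZFSet} {m : ℕ}
    (h : ∀ i, i + 1 < m → v i = v' i) : ∀ i < m, consV x v i = consV x v' i := by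
  intro i hi
  cases i with
  | zero => rfl
  | succ k => exact h k hi

theorem sat_agree : ∀ (φ : D0) (v v' : ℕ → ZFSet), (∀ i < maxVar φ, v i = v' i) →
    (SatD0 φ v ↔ SatD0 φ v')
  | .mem i j, v, v', h => by
    rw [SatD0, SatD0, h i (by simp only [maxVar]; omega), h j (by simp only [maxVar]; omega)]
  | .eq i j, v, v', h => by
    rw [SatD0, SatD0, h i (by simp only [maxVar]; omega), h j (by simp only [maxVar]; omega)]
  | .not φ, v, v', h => by rw [SatD0, SatD0, sat_agree φ v v' h]
  | .and φ ψ, v, v', h => by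
    rw [SatD0, SatD0, sat_agree φ v v' (fun i hi => h i (by simp only [maxVar]; omega)),
      sat_agree ψ v v' (fun i hi => h i (by simp only [maxVar]; omega))]
  | .or φ ψ, v, v', h => by
    rw [SatD0, SatD0, sat_agree φ v v' (fun i hi => h i (by simp only [maxVar]; omega)),
      sat_agree ψ v v' (fun i hi => h i (by simp only [maxVar]; omega))]
  | .ball n φ, v, v', h => by
    have hf : ∀ y : ZFSet, SatD0 φ (consV y v) ↔ SatD0 φ (consV y v') := fun y =>
      sat_agree φ _ _ (consV_cons_agree (fun i hi =>
        h i (by simp only [maxVar]; omega)))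
    rw [SatD0, SatD0, h n (by simp only [maxVar]; omega)]
    exact forall₂_congr fun x _ => hf x
  | .bex n φ, v, v', h => by
    have hf : ∀ y : ZFSet, SatD0 φ (consV y v) ↔ SatD0 φ (consV y v') := fun y =>
      sat_agree φ _ _ (consV_cons_agree (fun i hi =>
        h i (by simp only [maxVar]; omega)))
    rw [SatD0, SatD0, h n (by simp only [maxVar]; omega)]
    exact exists_congr fun x => and_congr_right fun _ => hf x


/-! ### Indexing elements of a ZFSet by a small type -/

instance small_toSet (x : ZFSet.{u}) : Small.{u} x.toSet := ZFSet.small_coe x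

def idx (x : ZFSet.{u}) : Type u := Shrink.{u} x.toSet

noncomputable def elemf (x : ZFSet.{u}) (i : idx x) : ZFSet.{u} :=
  ((equivShrink x.toSet).symm i : x.toSet)

theorem elemf_mem (x : ZFSet.{u}) (i : idx x) : elemf x i ∈ x :=
  ((equivShrink x.toSet).symm i).2

theorem exists_elemf {z x : ZFSet.{u}} (h : z ∈ x) : ∃ i, elemf x i = z :=
  ⟨equivShrink x.toSet ⟨z, h⟩, by simp [elemf]⟩

/-! ### The Mostowski collapse relative to a set `X` of ZF-sets -/

variable (X : Set ZFSet.{u})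

noncomputable def clp : ZFSet.{u} → ZFSet.{u} :=
  ZFSet.mem_wf.fix fun x IH =>
    ZFSet.range fun i : { i : idx x // elemf x i ∈ X } => IH (elemf x i.1) (elemf_mem _ _)

theorem mem_clp {y x : ZFSet.{u}} : y ∈ clp X x ↔ ∃ z ∈ x, z ∈ X ∧ clp X z = y := by
  have h : clp X x =
      ZFSet.range fun i : { i : idx x // elemf x i ∈ X } => clp X (elemf x i.1) :=
    WellFounded.fix_eq _ _ _
  rw [h, ZFSet.mem_range]
  constructor
  · rintro ⟨i, rfl⟩
    exact ⟨elemf x i.1, elemf_mem _ _, i.2, rfl⟩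
  · rintro ⟨z, hzx, hzX, hz⟩
    obtain ⟨i, rfl⟩ := exists_elemf hzx
    exact ⟨⟨i, hzX⟩, hz⟩

theorem clp_mem {x z : ZFSet.{u}} (hz : z ∈ x) (hzX : z ∈ X) : clp X z ∈ clp X x :=
  (mem_clp X).mpr ⟨z, hz, hzX, rfl⟩

/-- The collapse is the identity on a mem-closed subset of `X`. -/
theorem clp_fix {S : Set ZFSet.{u}} (hSX : S ⊆ X) (hS : ∀ z ∈ S, ∀ y ∈ z, y ∈ S) :
    ∀ x ∈ S, clp X x = x := by
  intro x
  induction x using ZFSet.inductionOn with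
  | _ x IH =>
    intro hx
    apply ZFSet.ext
    intro y
    rw [mem_clp]
    constructor
    · rintro ⟨z, hzx, _, rfl⟩
      rw [IH z hzx (hS x hx z hzx)]
      exact hzx
    · intro hy
      exact ⟨y, hy, hSX (hS x hx y hy), IH y hy (hS x hx y hy)⟩

/-- If `X` decides extensionality, the collapse is injective on `X`. -/
theorem clp_inj
    (hext : ∀ x ∈ X, ∀ y ∈ X, x ≠ y → ∃ z ∈ X, (z ∈ x ∧ z ∉ y) ∨ (z ∈ y ∧ z ∉ x)) :
    ∀ x ∈ X, ∀ y ∈ X, clp X x = clp X y → x = y := by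
  have key : ∀ o : Ordinal.{u}, ∀ x y : ZFSet.{u}, ZFSet.rank x < o → ZFSet.rank y < o →
      x ∈ X → y ∈ X → clp X x = clp X y → x = y := by
    intro o
    induction o using Ordinal.induction with
    | _ o IH =>
      intro x y hx hy hxX hyX h
      by_contra hne
      obtain ⟨z, hzX, hz⟩ := hext x hxX y hyX hne
      have hmax : max (ZFSet.rank x) (ZFSet.rank y) < o := max_lt hx hy
      rcases hz with ⟨hzx, hzy⟩ | ⟨hzy, hzx⟩
      · have hmem : clp X z ∈ clp X y := h ▸ clp_mem X hzx hzX
        rw [mem_clp] at hmem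
        obtain ⟨z', hz'y, hz'X, hz'⟩ := hmem
        have := IH _ hmax z' z
          (lt_of_lt_of_le (ZFSet.rank_lt_of_mem hz'y) (le_max_right _ _))
          (lt_of_lt_of_le (ZFSet.rank_lt_of_mem hzx) (le_max_left _ _))
          hz'X hzX hz'
        exact hzy (this ▸ hz'y)
      · have hmem : clp X z ∈ clp X x := h ▸ clp_mem X hzy hzX
        rw [mem_clp] at hmem
        obtain ⟨z', hz'x, hz'X, hz'⟩ := hmem
        have := IH _ hmax z' z
          (lt_of_lt_of_le (ZFSet.rank_lt_of_mem hz'x) (le_max_left _ _))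
          (lt_of_lt_of_le (ZFSet.rank_lt_of_mem hzy) (le_max_right _ _))
          hz'X hzX hz'
        exact hzx (this ▸ hz'x)
  intro x hx y hy h
  exact key (Order.succ (max (ZFSet.rank x) (ZFSet.rank y))) x y
    (Order.lt_succ_iff.mpr (le_max_left _ _)) (Order.lt_succ_iff.mpr (le_max_right _ _))
    hx hy h

/-- The collapse of an ordinal is an ordinal. -/
theorem isOrd_clp {x : ZFSet.{u}} (hx : IsOrd x) : IsOrd (clp X x) := by
  constructor
  · intro y hy
    rw [mem_clp] at hy
    obtain ⟨z, hzx, hzX, rfl⟩ := hy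
    intro w hw
    rw [mem_clp] at hw
    obtain ⟨z', hz'z, hz'X, rfl⟩ := hw
    exact clp_mem X (hx.1.mem_trans hz'z hzx) hz'X
  · intro y hy
    rw [mem_clp] at hy
    obtain ⟨z, hzx, hzX, rfl⟩ := hy
    intro w hw
    rw [mem_clp] at hw
    obtain ⟨z', hz'z, hz'X, rfl⟩ := hw
    intro u hu
    rw [mem_clp] at hu
    obtain ⟨z'', hz''z', hz''X, rfl⟩ := hu
    exact clp_mem X (hx.2 z hzx z' hz'z hz''z') hz''X


theorem consV_clp (z : ZFSet.{u}) (v : ℕ → ZFSet.{u}) :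
    (fun i => clp X (consV z v i)) = consV (clp X z) (fun i => clp X (v i)) :=
  funext fun i => by cases i <;> rfl

theorem consV_memX {z : ZFSet.{u}} {v : ℕ → ZFSet.{u}} (hz : z ∈ X) (hv : ∀ i, v i ∈ X) :
    ∀ i, consV z v i ∈ X := fun i => by cases i with
  | zero => exact hz
  | succ k => exact hv k

/-- Key lemma: the Mostowski collapse preserves Δ₀ satisfaction for valuations
into a sufficiently closed set `X`. -/
theorem sat_clp
    (hext : ∀ x ∈ X, ∀ y ∈ X, x ≠ y → ∃ z ∈ X, (z ∈ x ∧ z ∉ y) ∨ (z ∈ y ∧ z ∉ x))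
    (hbex : ∀ (n : ℕ) (φ : D0) (v : ℕ → ZFSet.{u}), (∀ i, v i ∈ X) →
      (∃ x ∈ v n, SatD0 φ (consV x v)) → ∃ x, x ∈ X ∧ x ∈ v n ∧ SatD0 φ (consV x v))
    (hball : ∀ (n : ℕ) (φ : D0) (v : ℕ → ZFSet.{u}), (∀ i, v i ∈ X) →
      (∃ x ∈ v n, ¬ SatD0 φ (consV x v)) →
        ∃ x, x ∈ X ∧ x ∈ v n ∧ ¬ SatD0 φ (consV x v)) :
    ∀ (φ : D0) (v : ℕ → ZFSet.{u}), (∀ i, v i ∈ X) →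
      (SatD0 φ v ↔ SatD0 φ (fun i => clp X (v i))) := by
  have inj := clp_inj X hext
  intro φ
  induction φ with
  | mem i j =>
    intro v hv
    rw [SatD0, SatD0]
    constructor
    · exact fun h => clp_mem X h (hv i)
    · intro h
      rw [mem_clp] at h
      obtain ⟨z, hzj, hzX, hz⟩ := h
      rwa [inj z hzX (v i) (hv i) hz] at hzj
  | eq i j =>
    intro v hv
    rw [SatD0, SatD0]
    exact ⟨fun h => by rw [h], fun h => inj _ (hv i) _ (hv j) h⟩
  | not φ IH =>
    intro v hv
    rw [SatD0, SatD0, IH v hv]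
  | and φ ψ IHφ IHψ =>
    intro v hv
    rw [SatD0, SatD0, IHφ v hv, IHψ v hv]
  | or φ ψ IHφ IHψ =>
    intro v hv
    rw [SatD0, SatD0, IHφ v hv, IHψ v hv]
  | ball n φ IH =>
    intro v hv
    rw [SatD0, SatD0]
    constructor
    · intro h x' hx'
      rw [mem_clp] at hx'
      obtain ⟨z, hzn, hzX, rfl⟩ := hx'
      have := (IH (consV z v) (consV_memX X hzX hv)).mp (h z hzn)
      rwa [consV_clp] at this
    · intro h
      by_contra hc
      push_neg at hc
      obtain ⟨x, hxX, hxn, hx⟩ := hball n φ v hv hc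
      apply hx
      have := h (clp X x) (clp_mem X hxn hxX)
      rw [← consV_clp] at this
      exact (IH (consV x v) (consV_memX X hxX hv)).mpr this
  | bex n φ IH =>
    intro v hv
    rw [SatD0, SatD0]
    constructor
    · intro h
      obtain ⟨x, hxX, hxn, hx⟩ := hbex n φ v hv h
      refine ⟨clp X x, clp_mem X hxn hxX, ?_⟩
      have := (IH (consV x v) (consV_memX X hxX hv)).mp hx
      rwa [consV_clp] at this
    · rintro ⟨x', hx', hsat⟩
      rw [mem_clp] at hx'
      obtain ⟨z, hzn, hzX, rfl⟩ := hx'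
      rw [← consV_clp] at hsat
      exact ⟨z, hzn, (IH (consV z v) (consV_memX X hzX hv)).mpr hsat⟩


/-! ### Von Neumann ordinals via `Ordinal` -/

/-- Enumeration of the ordinals below `o` by `o.ToType`. -/
noncomputable def tno (o : Ordinal.{u}) (i : o.ToType) : Ordinal.{u} :=
  ((Ordinal.ToType.mk (o := o)).symm i).1

theorem tno_lt {o : Ordinal.{u}} (i : o.ToType) : tno o i < o :=
  ((Ordinal.ToType.mk (o := o)).symm i).2

theorem tno_surj {o a : Ordinal.{u}} (ha : a < o) : ∃ i, tno o i = a :=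
  ⟨Ordinal.ToType.mk (o := o) ⟨a, ha⟩, by simp [tno]⟩

theorem tno_inj {o : Ordinal.{u}} {i j : o.ToType} (h : tno o i = tno o j) : i = j := by
  have := (Ordinal.ToType.mk (o := o)).symm.injective (Subtype.ext h)
  exact this

noncomputable def toZF : Ordinal.{u} → ZFSet.{u} :=
  Ordinal.lt_wf.fix (C := fun _ => ZFSet.{u}) fun (o : Ordinal.{u}) IH =>
    ZFSet.range fun i : o.ToType => IH (tno o i) (tno_lt i)

theorem mem_toZF {x : ZFSet.{u}} {o : Ordinal.{u}} : x ∈ toZF o ↔ ∃ a < o, toZF a = x := by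
  have h : toZF o = ZFSet.range fun i : o.ToType => toZF (tno o i) :=
    WellFounded.fix_eq _ _ _
  rw [h, ZFSet.mem_range]
  constructor
  · rintro ⟨i, hi⟩
    exact ⟨_, tno_lt i, hi⟩
  · rintro ⟨a, ha, rfl⟩
    obtain ⟨i, rfl⟩ := tno_surj ha
    exact ⟨i, rfl⟩

theorem toZF_mem {a b : Ordinal.{u}} (h : a < b) : toZF a ∈ toZF b :=
  mem_toZF.mpr ⟨a, h, rfl⟩

theorem toZF_injective : Function.Injective toZF.{u} := by
  intro a b h
  by_contra hne
  rcases lt_trichotomy a b with hab | hab | hab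
  · have := toZF_mem hab; rw [h] at this; exact ZFSet.mem_irrefl _ this
  · exact hne hab
  · have := toZF_mem hab; rw [h] at this; exact ZFSet.mem_irrefl _ this

theorem toZF_mem_iff {a b : Ordinal.{u}} : toZF a ∈ toZF b ↔ a < b := by
  refine ⟨fun h => ?_, toZF_mem⟩
  rw [mem_toZF] at h
  obtain ⟨a', ha', h⟩ := h
  rwa [toZF_injective h] at ha'

theorem rank_toZF (o : Ordinal.{u}) : ZFSet.rank (toZF o) = o := by
  induction o using Ordinal.induction with
  | _ o IH =>
    apply le_antisymm
    · rw [ZFSet.rank_le_iff]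
      intro y hy
      rw [mem_toZF] at hy
      obtain ⟨a, ha, rfl⟩ := hy
      rwa [IH a ha]
    · by_contra hlt
      push_neg at hlt
      have h2 := ZFSet.rank_lt_of_mem (toZF_mem hlt)
      rw [IH _ hlt] at h2
      exact lt_irrefl _ h2

theorem isTransitive_toZF (o : Ordinal.{u}) : (toZF o).IsTransitive := by
  intro y hy
  rw [mem_toZF] at hy
  obtain ⟨a, ha, rfl⟩ := hy
  intro z hz
  rw [mem_toZF] at hz
  obtain ⟨a', ha', rfl⟩ := hz
  exact toZF_mem (ha'.trans ha)

theorem isOrd_toZF (o : Ordinal.{u}) : IsOrd (toZF o) := by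
  refine ⟨isTransitive_toZF o, fun y hy => ?_⟩
  rw [mem_toZF] at hy
  obtain ⟨a, _, rfl⟩ := hy
  exact isTransitive_toZF a

theorem IsOrd.mem {x y : ZFSet.{u}} (hx : IsOrd x) (hy : y ∈ x) : IsOrd y :=
  ⟨hx.2 y hy, fun z hz => hx.2 z (hx.1.mem_trans hz hy)⟩

theorem toZF_rank {x : ZFSet.{u}} (hx : IsOrd x) : toZF (ZFSet.rank x) = x := by
  induction x using ZFSet.inductionOn with
  | _ x IH =>
    apply ZFSet.ext
    intro z
    rw [mem_toZF]
    constructor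
    · rintro ⟨a, ha, rfl⟩
      rw [ZFSet.lt_rank_iff] at ha
      obtain ⟨y, hy, hay⟩ := ha
      rcases eq_or_lt_of_le hay with rfl | hlt
      · rw [IH y hy (IsOrd.mem hx hy)]; exact hy
      · have : toZF a ∈ y := by
          rw [← IH y hy (IsOrd.mem hx hy)]
          exact toZF_mem hlt
        exact hx.1.mem_trans this hy
    · intro hz
      exact ⟨ZFSet.rank z, ZFSet.rank_lt_of_mem hz, IH z hz (IsOrd.mem hx hz)⟩

theorem isOrd_iff {x : ZFSet.{u}} : IsOrd x ↔ ∃ o, toZF o = x :=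
  ⟨fun h => ⟨_, toZF_rank h⟩, fun ⟨o, h⟩ => h ▸ isOrd_toZF o⟩


/-! ### `IsCardZ` corresponds to initial ordinals -/

theorem isCardZ_of_initial {o : Ordinal.{u}} (h : o.card.ord = o) : IsCardZ (toZF o) := by
  refine ⟨isOrd_toZF o, ?_⟩
  rintro ⟨b, hb, f, ⟨hsub, hfun⟩, hsurj⟩
  rw [mem_toZF] at hb
  obtain ⟨o', ho', rfl⟩ := hb
  have key : ∀ i : o'.ToType, ∃ j : o.ToType,
      ZFSet.pair (toZF (tno o' i)) (toZF (tno o j)) ∈ f := by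
    intro i
    obtain ⟨w, hw, -⟩ := hfun (toZF (tno o' i)) (toZF_mem (tno_lt i))
    have hwo : w ∈ toZF o := (ZFSet.pair_mem_prod.mp (hsub hw)).2
    rw [mem_toZF] at hwo
    obtain ⟨d, hd, rfl⟩ := hwo
    obtain ⟨j, rfl⟩ := tno_surj hd
    exact ⟨j, hw⟩
  choose g hg using key
  have hgsurj : Function.Surjective g := by
    intro j
    obtain ⟨a, ha, hpair⟩ := hsurj _ (toZF_mem (tno_lt j))
    rw [mem_toZF] at ha
    obtain ⟨d, hd, rfl⟩ := ha
    obtain ⟨i, rfl⟩ := tno_surj hd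
    obtain ⟨w, -, huniq⟩ := hfun _ (toZF_mem (tno_lt i))
    exact ⟨i, tno_inj (toZF_injective ((huniq _ (hg i)).trans (huniq _ hpair).symm))⟩
  have hle : o.card ≤ o'.card := by
    rw [← Cardinal.mk_toType, ← Cardinal.mk_toType]
    exact Cardinal.mk_le_of_surjective hgsurj
  have hlt : o'.card < o.card := Cardinal.lt_ord.mp (by rwa [h])
  exact absurd hle (not_le.mpr hlt)

theorem not_isCardZ_of_not_initial {o : Ordinal.{u}} (h : o.card.ord < o) :
    ¬ IsCardZ (toZF o) := by
  intro hc
  apply hc.2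
  set o' := o.card.ord with ho'
  have hmk : #o'.ToType = #o.ToType := by
    rw [Cardinal.mk_toType, Cardinal.mk_toType, ho', Cardinal.card_ord]
  obtain ⟨s⟩ := Cardinal.eq.mp hmk
  refine ⟨toZF o', toZF_mem h,
    ZFSet.range (fun i : o'.ToType => ZFSet.pair (toZF (tno o' i)) (toZF (tno o (s i)))),
    ⟨?_, ?_⟩, ?_⟩
  · intro z hz
    rw [ZFSet.mem_range] at hz
    obtain ⟨i, rfl⟩ := hz
    rw [ZFSet.pair_mem_prod]
    exact ⟨toZF_mem (tno_lt i), toZF_mem (tno_lt (s i))⟩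
  · intro z hz
    rw [mem_toZF] at hz
    obtain ⟨d, hd, rfl⟩ := hz
    obtain ⟨i, rfl⟩ := tno_surj hd
    refine ⟨toZF (tno o (s i)), ?_, ?_⟩
    · show _ ∈ ZFSet.range _
      rw [ZFSet.mem_range]
      exact ⟨i, rfl⟩
    · intro y hy
      rw [ZFSet.mem_range] at hy
      obtain ⟨i', hi'⟩ := hy
      obtain ⟨h1, h2⟩ := ZFSet.pair_injective hi'
      rw [← h2]
      rw [tno_inj (toZF_injective h1)]
  · intro c hc'
    rw [mem_toZF] at hc'
    obtain ⟨d, hd, rfl⟩ := hc'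
    obtain ⟨j, rfl⟩ := tno_surj hd
    obtain ⟨i, rfl⟩ := s.surjective j
    refine ⟨toZF (tno o' i), toZF_mem (tno_lt i), ?_⟩
    rw [ZFSet.mem_range]
    exact ⟨i, rfl⟩


/-! ### Countability of `D0` -/

def encD0 : D0 → ℕ
  | .mem i j => Nat.pair 0 (Nat.pair i j)
  | .eq i j => Nat.pair 1 (Nat.pair i j)
  | .not φ => Nat.pair 2 (encD0 φ)
  | .and φ ψ => Nat.pair 3 (Nat.pair (encD0 φ) (encD0 ψ))
  | .or φ ψ => Nat.pair 4 (Nat.pair (encD0 φ) (encD0 ψ))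
  | .ball n φ => Nat.pair 5 (Nat.pair n (encD0 φ))
  | .bex n φ => Nat.pair 6 (Nat.pair n (encD0 φ))

theorem encD0_inj : ∀ a b : D0, encD0 a = encD0 b → a = b := by
  intro a
  induction a <;> intro b h <;> cases b <;>
    simp only [encD0, Nat.pair_eq_pair] at h <;> try simp_all
  all_goals (try (obtain ⟨h1, h2⟩ := h))
  all_goals try subst h1
  all_goals first | (constructor <;> solve_by_elim) | solve_by_elim

instance : Countable D0 := ⟨encD0, encD0_inj⟩

/-! ### Skolem witnesses -/

open Classical in
noncomputable def extW (x y : ZFSet.{u}) : ZFSet.{u} :=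
  if h : ∃ z, (z ∈ x ∧ z ∉ y) ∨ (z ∈ y ∧ z ∉ x) then h.choose else ∅

theorem extW_spec {x y : ZFSet.{u}} (h : x ≠ y) :
    (extW x y ∈ x ∧ extW x y ∉ y) ∨ (extW x y ∈ y ∧ extW x y ∉ x) := by
  have hex : ∃ z, (z ∈ x ∧ z ∉ y) ∨ (z ∈ y ∧ z ∉ x) := by
    by_contra hc
    push_neg at hc
    apply h
    apply ZFSet.ext
    intro z
    have := hc z
    tauto
  rw [extW, dif_pos hex]
  exact hex.choose_spec

open Classical in
noncomputable def bexW (n : ℕ) (φ : D0) (t : ℕ → ZFSet.{u}) : ZFSet.{u} :=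
  if h : ∃ x ∈ t n, SatD0 φ (consV x t) then h.choose else ∅

theorem bexW_spec {n : ℕ} {φ : D0} {t : ℕ → ZFSet.{u}} (h : ∃ x ∈ t n, SatD0 φ (consV x t)) :
    bexW n φ t ∈ t n ∧ SatD0 φ (consV (bexW n φ t) t) := by
  rw [bexW, dif_pos h]
  exact h.choose_spec

open Classical in
noncomputable def ballW (n : ℕ) (φ : D0) (t : ℕ → ZFSet.{u}) : ZFSet.{u} :=
  if h : ∃ x ∈ t n, ¬ SatD0 φ (consV x t) then h.choose else ∅

theorem ballW_spec {n : ℕ} {φ : D0} {t : ℕ → ZFSet.{u}}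
    (h : ∃ x ∈ t n, ¬ SatD0 φ (consV x t)) :
    ballW n φ t ∈ t n ∧ ¬ SatD0 φ (consV (ballW n φ t) t) := by
  rw [ballW, dif_pos h]
  exact h.choose_spec

/-! ### The Skolem hull as a W-type -/

def arty (n : ℕ) (φ : D0) : ℕ := max (n + 1) (maxVar φ - 1)

def TmShape (β : Type u) : Type u := β ⊕ (PUnit.{u + 1} ⊕ ULift.{u} (ℕ × D0 × Bool))

def TmAr {β : Type u} : TmShape β → Type u
  | .inl _ => ULift (Fin 0)
  | .inr (.inl _) => ULift (Fin 2)
  | .inr (.inr s) => ULift (Fin (arty s.down.1 s.down.2.1))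

instance {β : Type u} (s : TmShape β) : Finite (TmAr s) := by
  rcases s with i | u | s <;> dsimp [TmAr] <;> infer_instance

variable {β : Type u}

noncomputable def evalW (bf : β → ZFSet.{u}) : WType (TmAr (β := β)) → ZFSet.{u}
  | ⟨.inl i, _⟩ => bf i
  | ⟨.inr (.inl _), f⟩ => extW (evalW bf (f (ULift.up 0))) (evalW bf (f (ULift.up 1)))
  | ⟨.inr (.inr s), f⟩ =>
      (cond s.down.2.2 (bexW s.down.1 s.down.2.1) (ballW s.down.1 s.down.2.1))
        (fun k => if h : k < arty s.down.1 s.down.2.1 then evalW bf (f (ULift.up ⟨k, h⟩))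
          else ∅)

/-- The Skolem hull generated by `bf`. -/
def hull (bf : β → ZFSet.{u}) : Set ZFSet.{u} := Set.range (evalW bf)

theorem base_mem_hull (bf : β → ZFSet.{u}) (i : β) : bf i ∈ hull bf :=
  ⟨⟨.inl i, fun x => x.down.elim0⟩, rfl⟩

theorem hull_ext (bf : β → ZFSet.{u}) :
    ∀ x ∈ hull bf, ∀ y ∈ hull bf, x ≠ y →
      ∃ z ∈ hull bf, (z ∈ x ∧ z ∉ y) ∨ (z ∈ y ∧ z ∉ x) := by
  rintro x ⟨s, rfl⟩ y ⟨t, rfl⟩ hne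
  refine ⟨extW (evalW bf s) (evalW bf t), ⟨⟨.inr (.inl PUnit.unit),
    fun k => if k.down = 0 then s else t⟩, ?_⟩, extW_spec hne⟩
  show extW _ _ = _
  norm_num

theorem hull_bex (bf : β → ZFSet.{u}) :
    ∀ (n : ℕ) (φ : D0) (v : ℕ → ZFSet.{u}), (∀ i, v i ∈ hull bf) →
      (∃ x ∈ v n, SatD0 φ (consV x v)) →
        ∃ x, x ∈ hull bf ∧ x ∈ v n ∧ SatD0 φ (consV x v) := by
  intro n φ v hv hex
  choose a ha using hv
  set t : ℕ → ZFSet.{u} := fun k => if k < arty n φ then v k else ∅ with ht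
  have htn : t n = v n := by
    simp only [ht]
    rw [if_pos (show n < arty n φ by simp only [arty]; omega)]
  have hagree : ∀ y : ZFSet.{u}, SatD0 φ (consV y t) ↔ SatD0 φ (consV y v) := by
    intro y
    refine sat_agree φ _ _ (consV_cons_agree fun i hi => ?_)
    simp only [ht]
    rw [if_pos]
    simp only [arty]
    omega
  have hex' : ∃ x ∈ t n, SatD0 φ (consV x t) := by
    rw [htn]
    obtain ⟨x, hx1, hx2⟩ := hex
    exact ⟨x, hx1, (hagree x).mpr hx2⟩
  obtain ⟨h1, h2⟩ := bexW_spec hex'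
  refine ⟨bexW n φ t, ⟨⟨.inr (.inr (ULift.up ⟨n, φ, true⟩)),
    fun k => a k.down.1⟩, ?_⟩, ?_, ?_⟩
  · show evalW bf _ = _
    simp only [evalW, cond_true]
    congr 1
    funext k
    simp only [ht]
    split_ifs with h
    · exact ha k
    · rfl
  · rwa [htn] at h1
  · exact (hagree _).mp h2


theorem hull_ball (bf : β → ZFSet.{u}) :
    ∀ (n : ℕ) (φ : D0) (v : ℕ → ZFSet.{u}), (∀ i, v i ∈ hull bf) →
      (∃ x ∈ v n, ¬ SatD0 φ (consV x v)) →
        ∃ x, x ∈ hull bf ∧ x ∈ v n ∧ ¬ SatD0 φ (consV x v) := by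
  intro n φ v hv hex
  choose a ha using hv
  set t : ℕ → ZFSet.{u} := fun k => if k < arty n φ then v k else ∅ with ht
  have htn : t n = v n := by
    simp only [ht]
    rw [if_pos (show n < arty n φ by simp only [arty]; omega)]
  have hagree : ∀ y : ZFSet.{u}, SatD0 φ (consV y t) ↔ SatD0 φ (consV y v) := by
    intro y
    refine sat_agree φ _ _ (consV_cons_agree fun i hi => ?_)
    simp only [ht]
    rw [if_pos]
    simp only [arty]
    omega
  have hex' : ∃ x ∈ t n, ¬ SatD0 φ (consV x t) := by
    rw [htn]
    obtain ⟨x, hx1, hx2⟩ := hex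
    exact ⟨x, hx1, fun hc => hx2 ((hagree x).mp hc)⟩
  obtain ⟨h1, h2⟩ := ballW_spec hex'
  refine ⟨ballW n φ t, ⟨⟨.inr (.inr (ULift.up ⟨n, φ, false⟩)),
    fun k => a k.down.1⟩, ?_⟩, ?_, ?_⟩
  · show evalW bf _ = _
    simp only [evalW, cond_false]
    congr 1
    funext k
    simp only [ht]
    split_ifs with h
    · exact ha k
    · rfl
  · rwa [htn] at h1
  · exact fun hc => h2 ((hagree _).mpr hc)

theorem card_tm_le (β : Type u) :
    #(WType (TmAr (β := β))) ≤ max #β Cardinal.aleph0.{u} := by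
  refine le_trans WType.cardinalMk_le_max_aleph0_of_finite' ?_
  rw [Cardinal.lift_id]
  have h1 : #(TmShape β) ≤ max #β Cardinal.aleph0.{u} := by
    rw [TmShape, Cardinal.mk_sum, Cardinal.lift_id, Cardinal.lift_id]
    have : #(PUnit.{u + 1} ⊕ ULift.{u} (ℕ × D0 × Bool)) ≤ Cardinal.aleph0.{u} :=
      Cardinal.mk_le_aleph0
    calc #β + #(PUnit.{u + 1} ⊕ ULift.{u} (ℕ × D0 × Bool)) ≤
        max #β Cardinal.aleph0.{u} + max #β Cardinal.aleph0.{u} := by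
          gcongr
          · exact le_max_left _ _
          · exact le_trans this (le_max_right _ _)
      _ = max #β Cardinal.aleph0.{u} := by
          apply Cardinal.add_eq_self
          exact le_max_right _ _
  exact max_le (le_trans h1 le_rfl) (le_max_right _ _)


/-! ### Transitive closure chain of `{p}` -/

def tc (p : ZFSet.{u}) : ℕ → ZFSet.{u}
  | 0 => {p}
  | n + 1 => ZFSet.sUnion (tc p n)

theorem tc_closed {p z y : ZFSet.{u}} {n : ℕ} (hz : z ∈ tc p n) (hy : y ∈ z) :
    y ∈ tc p (n + 1) :=
  ZFSet.mem_sUnion.mpr ⟨z, hz, hy⟩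

end NoSig

open NoSig Cardinal in
theorem no_sigma1_definition_of_cardinality' :
    ¬ ∃ (ψ : D0) (p : ZFSet.{u}), ∀ α : ZFSet.{u}, IsOrd α →
      (IsCardZ α ↔ ∃ w : ZFSet.{u},
        SatD0 ψ (consV w (consV α (consV p fun _ => (∅ : ZFSet.{u}))))) := by
  rintro ⟨ψ, p, H⟩
  -- the base cardinal
  set c₀ : Cardinal.{u} := #((n : ℕ) × idx (tc p n)) with hc₀
  set e : Cardinal.{u} := max c₀ ℵ₀ with he
  have he_inf : ℵ₀ ≤ e := le_max_right _ _
  set oe : Ordinal.{u} := e.ord with hoe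
  set κOrd : Ordinal.{u} := (Order.succ e).ord with hκOrd
  have hκ_card : κOrd.card = Order.succ e := Cardinal.card_ord _
  have hκ_init : κOrd.card.ord = κOrd := by rw [hκ_card]
  have hoelt : oe < κOrd := by
    rw [hoe, hκOrd]
    exact Cardinal.ord_lt_ord.mpr (Order.lt_succ e)
  set κ : ZFSet.{u} := toZF κOrd with hκ
  -- κ is a cardinal, so we get a Σ₁ witness
  have hκ_card_Z : IsCardZ κ := isCardZ_of_initial hκ_init
  obtain ⟨w, hw⟩ := (H κ (isOrd_toZF κOrd)).mp hκ_card_Z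
  -- the index type of the hull
  set β : Type u := ((n : ℕ) × idx (tc p n)) ⊕ ((oe + 1).ToType ⊕ (PUnit.{u+1} ⊕ PUnit.{u+1}))
    with hβ
  set bf : β → ZFSet.{u} := fun i => match i with
    | .inl ⟨n, i⟩ => elemf (tc p n) i
    | .inr (.inl j) => toZF (tno (oe + 1) j)
    | .inr (.inr (.inl _)) => κ
    | .inr (.inr (.inr _)) => w
    with hbf
  set X : Set ZFSet.{u} := hull bf with hX
  -- basic membership facts
  have htcX : ∀ z : ZFSet.{u}, (∃ n, z ∈ tc p n) → z ∈ X := by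
    rintro z ⟨n, hz⟩
    obtain ⟨i, hi⟩ := exists_elemf hz
    exact hi ▸ base_mem_hull bf (.inl ⟨n, i⟩)
  have hordX : ∀ o ≤ oe, toZF o ∈ X := by
    intro o ho
    obtain ⟨j, hj⟩ := tno_surj (show o < oe + 1 from lt_of_le_of_lt ho (by rw [Ordinal.add_one_eq_succ]; exact Order.lt_succ oe))
    exact hj ▸ base_mem_hull bf (.inr (.inl j))
  have hκX : κ ∈ X := base_mem_hull bf (.inr (.inr (.inl PUnit.unit)))
  have hwX : w ∈ X := base_mem_hull bf (.inr (.inr (.inr PUnit.unit)))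
  -- the collapse fixes the transitive closure of {p} and small ordinals
  have hfix_tc : ∀ z : ZFSet.{u}, (∃ n, z ∈ tc p n) → clp X z = z := by
    intro z hz
    exact clp_fix X (S := {z | ∃ n, z ∈ tc p n}) (fun y hy => htcX y hy)
      (fun z ⟨n, hz⟩ y hy => ⟨n + 1, tc_closed hz hy⟩) z hz
  have hp_fix : clp X p = p := hfix_tc p ⟨0, ZFSet.mem_singleton.mpr rfl⟩
  have hord_fix : ∀ o ≤ oe, clp X (toZF o) = toZF o := by
    intro o ho
    refine clp_fix X (S := {x | ∃ o' ≤ oe, toZF o' = x}) ?_ ?_ (toZF o) ⟨o, ho, rfl⟩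
    · rintro x ⟨o', ho', rfl⟩
      exact hordX o' ho'
    · rintro x ⟨o', ho', rfl⟩ y hy
      rw [mem_toZF] at hy
      obtain ⟨a, ha, rfl⟩ := hy
      exact ⟨a, le_of_lt (lt_of_lt_of_le ha ho'), rfl⟩
  have hzero_le : (0 : Ordinal.{u}) ≤ oe := zero_le
  have hempty : toZF (0 : Ordinal.{u}) = (∅ : ZFSet.{u}) := by
    apply ZFSet.ext
    intro z
    rw [mem_toZF]
    simp
  have hempty_fix : clp X (∅ : ZFSet.{u}) = ∅ := by
    rw [← hempty]
    exact hord_fix 0 hzero_le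
  have hemptyX : (∅ : ZFSet.{u}) ∈ X := hempty ▸ hordX 0 hzero_le
  -- the valuation
  set v : ℕ → ZFSet.{u} := consV w (consV κ (consV p fun _ => ∅)) with hv
  have hvX : ∀ i, v i ∈ X := by
    intro i
    match i with
    | 0 => exact hwX
    | 1 => exact hκX
    | 2 => exact htcX p ⟨0, ZFSet.mem_singleton.mpr rfl⟩
    | (k + 3) => exact hemptyX
  -- satisfaction transfers to the collapse
  have hsat := (sat_clp X (hull_ext bf) (hull_bex bf) (hull_ball bf) ψ v hvX).mp hw
  have hcoll : (fun i => clp X (v i)) =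
      consV (clp X w) (consV (clp X κ) (consV p fun _ => ∅)) := by
    funext i
    match i with
    | 0 => rfl
    | 1 => rfl
    | 2 => exact hp_fix
    | (k + 3) => exact hempty_fix
  rw [hcoll] at hsat
  -- the collapse of κ is a small non-cardinal ordinal
  have hκOrdZ : IsOrd (clp X κ) := isOrd_clp X (isOrd_toZF κOrd)
  set ρ : Ordinal.{u} := ZFSet.rank (clp X κ) with hρ
  have hρZ : toZF ρ = clp X κ := toZF_rank hκOrdZ
  -- ρ is bigger than oe
  have hρ_big : oe < ρ := by
    have h1 : toZF oe ∈ clp X κ := by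
      have : clp X (toZF oe) ∈ clp X κ :=
        clp_mem X (toZF_mem (lt_of_le_of_lt le_rfl hoelt)) (hordX oe le_rfl)
      rwa [hord_fix oe le_rfl] at this
    have := ZFSet.rank_lt_of_mem h1
    rwa [rank_toZF] at this
  -- ρ has cardinality at most e
  have hρ_small : ρ.card ≤ e := by
    have key : ∀ j : ρ.ToType, ∃ s : WType (TmAr (β := β)),
        clp X (evalW bf s) = toZF (tno ρ j) := by
      intro j
      have h1 : toZF (tno ρ j) ∈ clp X κ := by
        rw [← hρZ]
        exact toZF_mem (tno_lt j)
      rw [mem_clp] at h1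
      obtain ⟨z, hzκ, hzX, hz⟩ := h1
      obtain ⟨s, hs⟩ := hzX
      exact ⟨s, by rw [hs, hz]⟩
    choose g hg using key
    have hg_inj : Function.Injective g := by
      intro j1 j2 hj
      apply tno_inj (toZF_injective ?_)
      rw [← hg j1, ← hg j2, hj]
    calc ρ.card = #ρ.ToType := (Cardinal.mk_toType ρ).symm
      _ ≤ #(WType (TmAr (β := β))) := Cardinal.mk_le_of_injective hg_inj
      _ ≤ max #β ℵ₀ := card_tm_le β
      _ ≤ e := by
        apply max_le _ he_inf
        rw [hβ, Cardinal.mk_sum, Cardinal.mk_sum, Cardinal.mk_sum]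
        simp only [Cardinal.lift_id]
        have h1 : #((oe + 1).ToType) ≤ e := by
          rw [Cardinal.mk_toType, Ordinal.add_one_eq_succ, Ordinal.card_succ, hoe, Cardinal.card_ord]
          exact le_of_eq (Cardinal.add_one_eq he_inf)
        have h2 : #PUnit.{u+1} ≤ e := by
          rw [Cardinal.mk_punit]
          exact le_trans Cardinal.one_le_aleph0 he_inf
        refine Cardinal.add_le_of_le he_inf (le_max_left _ _) ?_
        exact Cardinal.add_le_of_le he_inf h1 (Cardinal.add_le_of_le he_inf h2 h2)
  -- ρ is not initial, hence not a cardinal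
  have hρ_not : ¬ IsCardZ (toZF ρ) := by
    apply not_isCardZ_of_not_initial
    calc ρ.card.ord ≤ e.ord := Cardinal.ord_le_ord.mpr hρ_small
      _ < ρ := hρ_big
  -- but the Σ₁ formula says it is a cardinal
  apply hρ_not
  apply (H (toZF ρ) (isOrd_toZF ρ)).mpr
  refine ⟨clp X w, ?_⟩
  rw [hρZ]
  exact hsat


/-- There is no Σ₁ formula `φ(x, p) = ∃w ψ(w, x, p)` (with `ψ` bounded) with a fixed
set parameter `p` such that, for all ordinals `α`, `α` is a cardinal iff `φ(α, p)`
holds in `V`. -/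
theorem no_sigma1_definition_of_cardinality :
    ¬ ∃ (ψ : D0) (p : ZFSet), ∀ α : ZFSet, IsOrd α →
      (IsCardZ α ↔ ∃ w : ZFSet,
        SatD0 ψ (consV w (consV α (consV p fun _ => (∅ : ZFSet))))) :=
  no_sigma1_definition_of_cardinality'
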